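/- Let V be a real m×m orthogonal matrix (VᵀV = I_m) and S a real m×m diagonal matrix. Then ‖S Vᵀ − S‖_F² = 2 Σ_{i=1}^m S_{ii}² (1 − V_{ii}), and moreover ‖S Vᵀ − S‖_F² ≤ 2 tr(S²) · max_{1≤i≤m} (1 − V_{ii}) ≤ tr(S²) · ‖I_m − V‖_F², where in particular ‖I_m − V‖_F² = 2 tr(I_m − V). -/
import Mathlib


open Matrix

/-- for orthogonal `V` and diagonal `S = diag(s)`,
`‖SVᵀ − S‖_F² = 2 Σᵢ sᵢ²(1 − Vᵢᵢ) ≤ 2 tr(S²) maxᵢ (1 − Vᵢᵢ) ≤ tr(S²) ‖I − V‖_F²`, and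
`‖I − V‖_F² = 2 tr(I − V)`. -/
theorem stmt_18 {m : ℕ} [NeZero m] (V : Matrix (Fin m) (Fin m) ℝ) (s : Fin m → ℝ)
    (hV : Vᵀ * V = 1) :
    (∑ i, ∑ j, (Matrix.diagonal s * Vᵀ - Matrix.diagonal s) i j ^ 2) =
        2 * ∑ i, s i ^ 2 * (1 - V i i) ∧
      (∑ i, ∑ j, (Matrix.diagonal s * Vᵀ - Matrix.diagonal s) i j ^ 2) ≤
        2 * (Matrix.diagonal s * Matrix.diagonal s).trace *
          (Finset.univ.sup' Finset.univ_nonempty fun i => 1 - V i i) ∧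
      2 * (Matrix.diagonal s * Matrix.diagonal s).trace *
          (Finset.univ.sup' Finset.univ_nonempty fun i => 1 - V i i) ≤
        (Matrix.diagonal s * Matrix.diagonal s).trace *
          (∑ i, ∑ j, ((1 : Matrix (Fin m) (Fin m) ℝ) - V) i j ^ 2) ∧
      (∑ i, ∑ j, ((1 : Matrix (Fin m) (Fin m) ℝ) - V) i j ^ 2) =
        2 * ((1 : Matrix (Fin m) (Fin m) ℝ) - V).trace := by
  -- column norms
  have hcol : ∀ j, (∑ k, V k j ^ 2) = 1 := by
    intro j
    have := congrFun (congrFun hV j) j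
    simp [Matrix.mul_apply, Matrix.transpose_apply, Matrix.one_apply] at this
    simpa [sq] using this
  have hdle : ∀ i, V i i ≤ 1 := by
    intro i
    nlinarith [hcol i, Finset.single_le_sum (f := fun k => V k i ^ 2)
      (fun k _ => sq_nonneg (V k i)) (Finset.mem_univ i), sq_nonneg (V i i - 1)]
  -- trace of S²
  have htr : (Matrix.diagonal s * Matrix.diagonal s).trace = ∑ i, s i ^ 2 := by
    simp [Matrix.diagonal_mul_diagonal, Matrix.trace_diagonal, sq]
  have htrnn : 0 ≤ (Matrix.diagonal s * Matrix.diagonal s).trace := by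
    rw [htr]; exact Finset.sum_nonneg fun i _ => sq_nonneg _
  -- first sum
  have h1 : (∑ i, ∑ j, (Matrix.diagonal s * Vᵀ - Matrix.diagonal s) i j ^ 2) =
      2 * ∑ i, s i ^ 2 * (1 - V i i) := by
    have : ∀ i, (∑ j, (Matrix.diagonal s * Vᵀ - Matrix.diagonal s) i j ^ 2) =
        2 * (s i ^ 2 * (1 - V i i)) := by
      intro i
      have hterm : ∀ j, (Matrix.diagonal s * Vᵀ - Matrix.diagonal s) i j ^ 2 =
          s i ^ 2 * V j i ^ 2 + (if j = i then s i ^ 2 - 2 * s i ^ 2 * V i i else 0) := by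
        intro j
        simp only [Matrix.sub_apply, Matrix.diagonal_mul, Matrix.transpose_apply,
          Matrix.diagonal_apply]
        by_cases h : j = i
        · subst h; simp; ring
        · simp [h, Ne.symm h]; ring
      rw [Finset.sum_congr rfl (fun j _ => hterm j), Finset.sum_add_distrib,
        ← Finset.mul_sum, hcol i, Finset.sum_ite_eq' Finset.univ i]
      simp; ring
    rw [Finset.sum_congr rfl (fun i _ => this i), ← Finset.mul_sum]
  -- fourth sum
  have h4 : (∑ i, ∑ j, ((1 : Matrix (Fin m) (Fin m) ℝ) - V) i j ^ 2) =
      2 * ((1 : Matrix (Fin m) (Fin m) ℝ) - V).trace := by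
    have hterm : ∀ i j, ((1 : Matrix (Fin m) (Fin m) ℝ) - V) i j ^ 2 =
        V i j ^ 2 + (if j = i then 1 - 2 * V i i else 0) := by
      intro i j
      simp only [Matrix.sub_apply, Matrix.one_apply]
      by_cases h : j = i
      · subst h; simp; ring
      · simp [h, Ne.symm h]
    have hall : (∑ i, ∑ j, (V i j ^ 2 : ℝ)) = m := by
      rw [Finset.sum_comm]
      simp [hcol]
    calc (∑ i, ∑ j, ((1 : Matrix (Fin m) (Fin m) ℝ) - V) i j ^ 2)
        = ∑ i, (∑ j, (V i j ^ 2 : ℝ)) + ∑ i, (1 - 2 * V i i) := by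
          simp only [hterm, Finset.sum_add_distrib, Finset.sum_ite_eq' Finset.univ]
          simp
      _ = (m : ℝ) + ((m : ℝ) - 2 * ∑ i, V i i) := by
          rw [hall]; simp [Finset.sum_sub_distrib, Finset.mul_sum]
      _ = 2 * ((1 : Matrix (Fin m) (Fin m) ℝ) - V).trace := by
          simp [Matrix.trace, Matrix.diag, Matrix.sub_apply, Matrix.one_apply,
            Finset.sum_sub_distrib]
          ring
  set M := Finset.univ.sup' Finset.univ_nonempty fun i => 1 - V i i with hM
  have hMle : ∀ i, 1 - V i i ≤ M := fun i => Finset.le_sup' (f := fun k => 1 - V k k) (Finset.mem_univ i)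
  refine ⟨h1, ?_, ?_, h4⟩
  · rw [h1, htr]
    have key : (∑ i, s i ^ 2 * (1 - V i i)) ≤ (∑ i, s i ^ 2) * M := by
      rw [Finset.sum_mul]
      exact Finset.sum_le_sum fun i _ =>
        mul_le_mul_of_nonneg_left (hMle i) (sq_nonneg (s i))
    linarith
  · rw [h4]
    have htrV : ((1 : Matrix (Fin m) (Fin m) ℝ) - V).trace = ∑ i, (1 - V i i) := by
      simp [Matrix.trace, Matrix.diag, Matrix.sub_apply, Matrix.one_apply]
    have hMleSum : M ≤ ∑ i, (1 - V i i) := by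
      apply Finset.sup'_le
      intro i _
      exact Finset.single_le_sum (f := fun k => 1 - V k k)
        (fun k _ => by simpa using sub_nonneg.mpr (hdle k)) (Finset.mem_univ i)
    rw [htrV]
    nlinarith
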